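/- Let J be a B(H)-ideal and S ∈ J. Then JS + SJ + J(S)J is never a maximal J-ideal in ⟨S⟩_J: if JS + SJ + J(S)J ⊊ ⟨S⟩_J, then there exists a J-ideal I with JS + SJ + J(S)J ⊊ I ⊊ ⟨S⟩_J. -/
import Mathlib


open scoped BigOperators
open TopologicalSpace

variable {H : Type*} [NormedAddCommGroup H] [InnerProductSpace ℂ H] [CompleteSpace H]

/-- `J` is a two-sided ideal of `B(H)`: an additive subgroup closed under left and
right multiplication by arbitrary bounded operators. -/
def IsBHIdeal (J : Set (H →L[ℂ] H)) : Prop :=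
  (0 : H →L[ℂ] H) ∈ J ∧
  (∀ x ∈ J, ∀ y ∈ J, x + y ∈ J) ∧
  (∀ x ∈ J, -x ∈ J) ∧
  ∀ (A : H →L[ℂ] H), ∀ x ∈ J, A * x ∈ J ∧ x * A ∈ J

/-- `I` is a `J`-ideal: an additive subgroup of `B(H)` contained in `J` and closed
under left and right multiplication by elements of `J`. -/
def IsSubideal (J I : Set (H →L[ℂ] H)) : Prop :=
  I ⊆ J ∧ (0 : H →L[ℂ] H) ∈ I ∧
  (∀ x ∈ I, ∀ y ∈ I, x + y ∈ I) ∧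
  (∀ x ∈ I, -x ∈ I) ∧
  ∀ A ∈ J, ∀ x ∈ I, A * x ∈ I ∧ x * A ∈ I

/-- A linear `J`-ideal: a `J`-ideal closed under multiplication by complex scalars. -/
def IsLinearSubideal (J I : Set (H →L[ℂ] H)) : Prop :=
  IsSubideal J I ∧ ∀ (c : ℂ), ∀ x ∈ I, c • x ∈ I

/-- A real linear `J`-ideal: a `J`-ideal closed under multiplication by real scalars. -/
def IsRealSubideal (J I : Set (H →L[ℂ] H)) : Prop :=
  IsSubideal J I ∧ ∀ (r : ℝ), ∀ x ∈ I, r • x ∈ I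

/-- `(𝒮)`: the smallest two-sided ideal of `B(H)` containing `𝒮`. -/
def genBH (𝒮 : Set (H →L[ℂ] H)) : Set (H →L[ℂ] H) :=
  ⋂₀ {I | IsBHIdeal I ∧ 𝒮 ⊆ I}

/-- `⟨𝒮⟩_J`: the smallest `J`-ideal containing `𝒮`. -/
def genSub (J 𝒮 : Set (H →L[ℂ] H)) : Set (H →L[ℂ] H) :=
  ⋂₀ {I | IsSubideal J I ∧ 𝒮 ⊆ I}

/-- `(𝒮)_J`: the smallest linear `J`-ideal containing `𝒮`. -/
def genLin (J 𝒮 : Set (H →L[ℂ] H)) : Set (H →L[ℂ] H) :=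
  ⋂₀ {I | IsLinearSubideal J I ∧ 𝒮 ⊆ I}

/-- `(𝒮)_J^ℝ`: the smallest real linear `J`-ideal containing `𝒮`. -/
def genReal (J 𝒮 : Set (H →L[ℂ] H)) : Set (H →L[ℂ] H) :=
  ⋂₀ {I | IsRealSubideal J I ∧ 𝒮 ⊆ I}

/-- `J(𝒮)`: all finite sums `Σ Aᵢ Xᵢ` with `Aᵢ ∈ J` and `Xᵢ ∈ (𝒮)`. -/
def JGen (J 𝒮 : Set (H →L[ℂ] H)) : Set (H →L[ℂ] H) :=
  {T | ∃ (n : ℕ) (A X : Fin n → (H →L[ℂ] H)),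
    (∀ i, A i ∈ J ∧ X i ∈ genBH 𝒮) ∧ T = ∑ i, A i * X i}

/-- `J(𝒮)J`: all finite sums `Σ Aᵢ Xᵢ Bᵢ` with `Aᵢ, Bᵢ ∈ J` and `Xᵢ ∈ (𝒮)`. -/
def JGenJ (J 𝒮 : Set (H →L[ℂ] H)) : Set (H →L[ℂ] H) :=
  {T | ∃ (n : ℕ) (A X B : Fin n → (H →L[ℂ] H)),
    (∀ i, A i ∈ J ∧ X i ∈ genBH 𝒮 ∧ B i ∈ J) ∧ T = ∑ i, A i * X i * B i}

/-- `JS + SJ + J(S)J = {AS + SB + Y : A, B ∈ J, Y ∈ J(S)J}`. -/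
def JSplus (J : Set (H →L[ℂ] H)) (S : H →L[ℂ] H) : Set (H →L[ℂ] H) :=
  {T | ∃ A ∈ J, ∃ B ∈ J, ∃ Y ∈ JGenJ J {S}, T = A * S + S * B + Y}

/-- `K(H)`: the compact operators on `H`. -/
def KH : Set (H →L[ℂ] H) := {T | IsCompactOperator ⇑T}

/-- `T` is a finite-rank operator: its range is finite-dimensional. -/
def IsFiniteRank (T : H →L[ℂ] H) : Prop :=
  FiniteDimensional ℂ (LinearMap.range (T : H →ₗ[ℂ] H))

set_option linter.unusedSectionVars false

section Helpers

variable {J : Set (H →L[ℂ] H)} {S : H →L[ℂ] H}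

/-- package a 0/add/neg-closed set as an additive subgroup -/
noncomputable def asAddSubgroup (I : Set (H →L[ℂ] H)) (h0 : (0 : H →L[ℂ] H) ∈ I)
    (hadd : ∀ x ∈ I, ∀ y ∈ I, x + y ∈ I) (hneg : ∀ x ∈ I, -x ∈ I) :
    AddSubgroup (H →L[ℂ] H) where
  carrier := I
  zero_mem' := h0
  add_mem' ha hb := hadd _ ha _ hb
  neg_mem' ha := hneg _ ha

lemma smul_mem_ideal (hJ : IsBHIdeal J) (c : ℂ) {A : H →L[ℂ] H} (hA : A ∈ J) :
    c • A ∈ J := by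
  have : c • A = (c • (1 : H →L[ℂ] H)) * A := by rw [smul_mul_assoc, one_mul]
  rw [this]
  exact (hJ.2.2.2 _ A hA).1

lemma S_mem_genBH : S ∈ genBH ({S} : Set (H →L[ℂ] H)) := by
  intro I hI
  exact hI.2 rfl

lemma JGenJ_zero : (0 : H →L[ℂ] H) ∈ JGenJ J {S} :=
  ⟨0, Fin.elim0, Fin.elim0, Fin.elim0, fun i => i.elim0, by simp⟩

lemma JGenJ_add {x y : H →L[ℂ] H} (hx : x ∈ JGenJ J {S}) (hy : y ∈ JGenJ J {S}) :
    x + y ∈ JGenJ J {S} := by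
  obtain ⟨n, A, X, B, h1, rfl⟩ := hx
  obtain ⟨m, A', X', B', h1', rfl⟩ := hy
  refine ⟨n + m, Fin.append A A', Fin.append X X', Fin.append B B', ?_, ?_⟩
  · intro i
    refine Fin.addCases (fun j => ?_) (fun j => ?_) i
    · simpa [Fin.append_left] using h1 j
    · simpa [Fin.append_right] using h1' j
  · rw [Fin.sum_univ_add]
    simp [Fin.append_left, Fin.append_right]

lemma JGenJ_neg {x : H →L[ℂ] H} (hx : x ∈ JGenJ J {S}) (hJ : IsBHIdeal J) :
    -x ∈ JGenJ J {S} := by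
  obtain ⟨n, A, X, B, h1, rfl⟩ := hx
  refine ⟨n, fun i => -A i, X, B, fun i => ⟨hJ.2.2.1 _ (h1 i).1, (h1 i).2⟩, ?_⟩
  simp [Finset.sum_neg_distrib, neg_mul]

lemma JGenJ_smul (hJ : IsBHIdeal J) (c : ℂ) {x : H →L[ℂ] H} (hx : x ∈ JGenJ J {S}) :
    c • x ∈ JGenJ J {S} := by
  obtain ⟨n, A, X, B, h1, rfl⟩ := hx
  refine ⟨n, fun i => c • A i, X, B,
    fun i => ⟨smul_mem_ideal hJ c (h1 i).1, (h1 i).2⟩, ?_⟩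
  rw [Finset.smul_sum]
  simp [smul_mul_assoc]

lemma JGenJ_mul_left (hJ : IsBHIdeal J) {C x : H →L[ℂ] H} (hC : C ∈ J)
    (hx : x ∈ JGenJ J {S}) : C * x ∈ JGenJ J {S} := by
  obtain ⟨n, A, X, B, h1, rfl⟩ := hx
  refine ⟨n, fun i => C * A i, X, B,
    fun i => ⟨(hJ.2.2.2 _ C hC).2, (h1 i).2⟩, ?_⟩
  rw [Finset.mul_sum]
  simp [mul_assoc]

lemma JGenJ_mul_right (hJ : IsBHIdeal J) {C x : H →L[ℂ] H} (hC : C ∈ J)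
    (hx : x ∈ JGenJ J {S}) : x * C ∈ JGenJ J {S} := by
  obtain ⟨n, A, X, B, h1, rfl⟩ := hx
  refine ⟨n, A, X, fun i => B i * C,
    fun i => ⟨(h1 i).1, (h1 i).2.1, (hJ.2.2.2 C _ (h1 i).2.2).2⟩, ?_⟩
  rw [Finset.sum_mul]
  simp [mul_assoc]

lemma JGenJ_single (hJ : IsBHIdeal J) {A X B : H →L[ℂ] H} (hA : A ∈ J)
    (hX : X ∈ genBH ({S} : Set (H →L[ℂ] H))) (hB : B ∈ J) :
    A * X * B ∈ JGenJ J {S} :=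
  ⟨1, fun _ => A, fun _ => X, fun _ => B, fun _ => ⟨hA, hX, hB⟩, by simp⟩

lemma JGenJ_subset (hJ : IsBHIdeal J) : JGenJ J {S} ⊆ J := by
  rintro x ⟨n, A, X, B, h1, rfl⟩
  set G := asAddSubgroup J hJ.1 hJ.2.1 hJ.2.2.1 with hG
  have : ∀ i, A i * X i * B i ∈ G := by
    intro i
    exact (hJ.2.2.2 (B i) _ (hJ.2.2.2 (X i) (A i) (h1 i).1).2).2
  exact G.sum_mem fun i _ => this i

-- JSplus lemmas
lemma JSplus_zero (hJ : IsBHIdeal J) : (0 : H →L[ℂ] H) ∈ JSplus J S :=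
  ⟨0, hJ.1, 0, hJ.1, 0, JGenJ_zero, by simp⟩

lemma JSplus_add (hJ : IsBHIdeal J) {x y : H →L[ℂ] H} (hx : x ∈ JSplus J S)
    (hy : y ∈ JSplus J S) : x + y ∈ JSplus J S := by
  obtain ⟨A, hA, B, hB, Y, hY, rfl⟩ := hx
  obtain ⟨A', hA', B', hB', Y', hY', rfl⟩ := hy
  refine ⟨A + A', hJ.2.1 _ hA _ hA', B + B', hJ.2.1 _ hB _ hB',
    Y + Y', JGenJ_add hY hY', ?_⟩
  noncomm_ring

lemma JSplus_neg (hJ : IsBHIdeal J) {x : H →L[ℂ] H} (hx : x ∈ JSplus J S) :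
    -x ∈ JSplus J S := by
  obtain ⟨A, hA, B, hB, Y, hY, rfl⟩ := hx
  refine ⟨-A, hJ.2.2.1 _ hA, -B, hJ.2.2.1 _ hB, -Y, JGenJ_neg hY hJ, ?_⟩
  noncomm_ring

lemma JSplus_smul (hJ : IsBHIdeal J) (c : ℂ) {x : H →L[ℂ] H} (hx : x ∈ JSplus J S) :
    c • x ∈ JSplus J S := by
  obtain ⟨A, hA, B, hB, Y, hY, rfl⟩ := hx
  refine ⟨c • A, smul_mem_ideal hJ c hA, c • B, smul_mem_ideal hJ c hB,
    c • Y, JGenJ_smul hJ c hY, ?_⟩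
  simp [smul_add, smul_mul_assoc, mul_smul_comm]

lemma JSplus_mul_left (hJ : IsBHIdeal J) {C x : H →L[ℂ] H} (hC : C ∈ J)
    (hx : x ∈ JSplus J S) : C * x ∈ JSplus J S := by
  obtain ⟨A, hA, B, hB, Y, hY, rfl⟩ := hx
  refine ⟨C * A, (hJ.2.2.2 A C hC).2, 0, hJ.1,
    C * S * B + C * Y,
    JGenJ_add (JGenJ_single hJ hC S_mem_genBH hB) (JGenJ_mul_left hJ hC hY), ?_⟩
  noncomm_ring

lemma JSplus_mul_right (hJ : IsBHIdeal J) {C x : H →L[ℂ] H} (hC : C ∈ J)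
    (hx : x ∈ JSplus J S) : x * C ∈ JSplus J S := by
  obtain ⟨A, hA, B, hB, Y, hY, rfl⟩ := hx
  refine ⟨0, hJ.1, B * C, (hJ.2.2.2 C B hB).2,
    A * S * C + Y * C,
    JGenJ_add (JGenJ_single hJ hA S_mem_genBH hC) (JGenJ_mul_right hJ hC hY), ?_⟩
  noncomm_ring

lemma JSplus_subset_J (hJ : IsBHIdeal J) (hS : S ∈ J) : JSplus J S ⊆ J := by
  rintro x ⟨A, hA, B, hB, Y, hY, rfl⟩
  exact hJ.2.1 _ (hJ.2.1 _ (hJ.2.2.2 A S hS).1 _ (hJ.2.2.2 B S hS).2) _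
    (JGenJ_subset hJ hY)

lemma JSplus_isSubideal (hJ : IsBHIdeal J) (hS : S ∈ J) :
    IsSubideal J (JSplus J S) :=
  ⟨JSplus_subset_J hJ hS, JSplus_zero hJ, fun x hx y hy => JSplus_add hJ hx hy,
    fun x hx => JSplus_neg hJ hx,
    fun A hA x hx => ⟨JSplus_mul_left hJ hA hx, JSplus_mul_right hJ hA hx⟩⟩

-- genSub lemmas
lemma isSubideal_self (hJ : IsBHIdeal J) : IsSubideal J J :=
  ⟨subset_rfl, hJ.1, hJ.2.1, hJ.2.2.1, fun A _ x hx => hJ.2.2.2 A x hx⟩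

lemma mem_genSub_iff {x : H →L[ℂ] H} :
    x ∈ genSub J ({S} : Set (H →L[ℂ] H)) ↔
      ∀ I, IsSubideal J I → S ∈ I → x ∈ I := by
  simp [genSub, Set.mem_sInter, Set.singleton_subset_iff]

lemma S_mem_genSub : S ∈ genSub J ({S} : Set (H →L[ℂ] H)) :=
  mem_genSub_iff.2 fun _ _ hSI => hSI

lemma genSub_minimal {I : Set (H →L[ℂ] H)} (hI : IsSubideal J I) (hSI : S ∈ I) :
    genSub J ({S} : Set (H →L[ℂ] H)) ⊆ I :=
  fun _ hx => mem_genSub_iff.1 hx I hI hSI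

lemma genSub_isSubideal (hJ : IsBHIdeal J) (hS : S ∈ J) :
    IsSubideal J (genSub J ({S} : Set (H →L[ℂ] H))) := by
  refine ⟨?_, ?_, ?_, ?_, ?_⟩
  · exact genSub_minimal (isSubideal_self hJ) hS
  · exact mem_genSub_iff.2 fun I hI _ => hI.2.1
  · intro x hx y hy
    exact mem_genSub_iff.2 fun I hI hSI =>
      hI.2.2.1 _ (mem_genSub_iff.1 hx I hI hSI) _ (mem_genSub_iff.1 hy I hI hSI)
  · intro x hx
    exact mem_genSub_iff.2 fun I hI hSI => hI.2.2.2.1 _ (mem_genSub_iff.1 hx I hI hSI)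
  · intro A hA x hx
    constructor
    · exact mem_genSub_iff.2 fun I hI hSI =>
        (hI.2.2.2.2 A hA _ (mem_genSub_iff.1 hx I hI hSI)).1
    · exact mem_genSub_iff.2 fun I hI hSI =>
        (hI.2.2.2.2 A hA _ (mem_genSub_iff.1 hx I hI hSI)).2

/-- For `X ∈ (S)` and `A, B ∈ J`, the product `A X B` lies in `⟨S⟩_J`. -/
lemma genBH_mul_mem (hJ : IsBHIdeal J) (hS : S ∈ J) {X : H →L[ℂ] H}
    (hX : X ∈ genBH ({S} : Set (H →L[ℂ] H))) {A B : H →L[ℂ] H}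
    (hA : A ∈ J) (hB : B ∈ J) : A * X * B ∈ genSub J ({S} : Set (H →L[ℂ] H)) := by
  set M : Set (H →L[ℂ] H) :=
    {X | ∀ A ∈ J, ∀ B ∈ J, A * X * B ∈ genSub J ({S} : Set (H →L[ℂ] H))} with hM
  have hg := genSub_isSubideal hJ hS
  have hMideal : IsBHIdeal M ∧ ({S} : Set (H →L[ℂ] H)) ⊆ M := by
    refine ⟨⟨?_, ?_, ?_, ?_⟩, ?_⟩
    · intro A hA B hB; simpa using hg.2.1
    · intro x hx y hy A hA B hB
      have : A * (x + y) * B = A * x * B + A * y * B := by noncomm_ring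
      rw [this]
      exact hg.2.2.1 _ (hx A hA B hB) _ (hy A hA B hB)
    · intro x hx A hA B hB
      have : A * (-x) * B = -(A * x * B) := by noncomm_ring
      rw [this]
      exact hg.2.2.2.1 _ (hx A hA B hB)
    · intro C x hx
      constructor
      · intro A hA B hB
        have : A * (C * x) * B = (A * C) * x * B := by noncomm_ring
        rw [this]
        exact hx _ (hJ.2.2.2 C A hA).2 B hB
      · intro A hA B hB
        have : A * (x * C) * B = A * x * (C * B) := by noncomm_ring
        rw [this]
        exact hx A hA _ (hJ.2.2.2 C B hB).1
    · intro x hx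
      intro A hA B hB
      have hxS : x = S := hx
      rw [hxS]
      exact (hg.2.2.2.2 B hB _ ((hg.2.2.2.2 A hA S S_mem_genSub).1)).2
  exact hX M hMideal A hA B hB

lemma JSplus_subset_genSub (hJ : IsBHIdeal J) (hS : S ∈ J) :
    JSplus J S ⊆ genSub J ({S} : Set (H →L[ℂ] H)) := by
  have hg := genSub_isSubideal hJ hS
  rintro x ⟨A, hA, B, hB, Y, hY, rfl⟩
  have hY' : Y ∈ genSub J ({S} : Set (H →L[ℂ] H)) := by
    obtain ⟨n, A', X', B', h1, rfl⟩ := hY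
    set G := asAddSubgroup _ hg.2.1 hg.2.2.1 hg.2.2.2.1 with hG
    exact G.sum_mem fun i _ => genBH_mul_mem hJ hS (h1 i).2.1 (h1 i).1 (h1 i).2.2
  exact hg.2.2.1 _ (hg.2.2.1 _ ((hg.2.2.2.2 A hA S S_mem_genSub).1) _
    ((hg.2.2.2.2 B hB S S_mem_genSub).2)) _ hY'

lemma S_not_mem_JSplus (hJ : IsBHIdeal J) (hS : S ∈ J)
    (h : JSplus J S ⊂ genSub J ({S} : Set (H →L[ℂ] H))) : S ∉ JSplus J S := by
  intro hmem
  exact h.2 (genSub_minimal (JSplus_isSubideal hJ hS) hmem)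

end Helpers

theorem stmt_15' (J : Set (H →L[ℂ] H)) (hJ : IsBHIdeal J)
    (S : H →L[ℂ] H) (hS : S ∈ J)
    (h : JSplus J S ⊂ genSub J {S}) :
    ∃ I, IsSubideal J I ∧ JSplus J S ⊂ I ∧ I ⊂ genSub J {S} := by
  have hSnotin : S ∉ JSplus J S := S_not_mem_JSplus hJ hS h
  have hg := genSub_isSubideal hJ hS
  set I : Set (H →L[ℂ] H) :=
    {T | ∃ m : ℤ, ∃ Y ∈ JSplus J S, T = (((2 * m : ℤ) : ℂ)) • S + Y} with hI
  have hASmem : ∀ A ∈ J, A * S ∈ JSplus J S := fun A hA =>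
    ⟨A, hA, 0, hJ.1, 0, JGenJ_zero, by simp⟩
  have hSAmem : ∀ A ∈ J, S * A ∈ JSplus J S := fun A hA =>
    ⟨0, hJ.1, A, hA, 0, JGenJ_zero, by simp⟩
  have hsub : IsSubideal J I := by
    refine ⟨?_, ?_, ?_, ?_, ?_⟩
    · rintro T ⟨m, Y, hY, rfl⟩
      exact hJ.2.1 _ (smul_mem_ideal hJ _ hS) _ (JSplus_subset_J hJ hS hY)
    · exact ⟨0, 0, JSplus_zero hJ, by norm_num⟩
    · rintro x ⟨m, Y, hY, rfl⟩ y ⟨m', Y', hY', rfl⟩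
      refine ⟨m + m', Y + Y', JSplus_add hJ hY hY', ?_⟩
      have : (((2 * (m + m') : ℤ) : ℂ)) = (((2 * m : ℤ) : ℂ)) + (((2 * m' : ℤ) : ℂ)) := by
        push_cast; ring
      rw [this, add_smul]; abel
    · rintro x ⟨m, Y, hY, rfl⟩
      refine ⟨-m, -Y, JSplus_neg hJ hY, ?_⟩
      have : (((2 * (-m) : ℤ) : ℂ)) = -(((2 * m : ℤ) : ℂ)) := by push_cast; ring
      rw [this, neg_smul]; abel
    · rintro A hA x ⟨m, Y, hY, rfl⟩
      constructor
      · refine ⟨0, (((2 * m : ℤ) : ℂ)) • (A * S) + A * Y,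
          JSplus_add hJ (JSplus_smul hJ _ (hASmem A hA)) (JSplus_mul_left hJ hA hY), ?_⟩
        rw [mul_add, mul_smul_comm]
        norm_num
      · refine ⟨0, (((2 * m : ℤ) : ℂ)) • (S * A) + Y * A,
          JSplus_add hJ (JSplus_smul hJ _ (hSAmem A hA)) (JSplus_mul_right hJ hA hY), ?_⟩
        rw [add_mul, smul_mul_assoc]
        norm_num
  refine ⟨I, hsub, ⟨?_, ?_⟩, ⟨?_, ?_⟩⟩
  · -- JSplus ⊆ I
    intro T hT
    exact ⟨0, T, hT, by norm_num⟩
  · -- ¬ I ⊆ JSplus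
    intro hc
    have h2S : ((2 : ℂ)) • S ∈ I := ⟨1, 0, JSplus_zero hJ, by norm_num⟩
    have h2S' : ((2 : ℂ)) • S ∈ JSplus J S := hc h2S
    have : S ∈ JSplus J S := by
      have := JSplus_smul hJ ((2 : ℂ)⁻¹) h2S'
      rwa [smul_smul, inv_mul_cancel₀ (by norm_num : (2:ℂ) ≠ 0), one_smul] at this
    exact hSnotin this
  · -- I ⊆ genSub
    rintro T ⟨m, Y, hY, rfl⟩
    set G := asAddSubgroup _ hg.2.1 hg.2.2.1 hg.2.2.2.1 with hG
    have h1 : (((2 * m : ℤ) : ℂ)) • S ∈ genSub J ({S} : Set (H →L[ℂ] H)) := by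
      have : (((2 * m : ℤ) : ℂ)) • S = (2 * m : ℤ) • S := Int.cast_smul_eq_zsmul ℂ _ _
      rw [this]
      exact G.zsmul_mem S_mem_genSub _
    exact hg.2.2.1 _ h1 _ (JSplus_subset_genSub hJ hS hY)
  · -- ¬ genSub ⊆ I
    intro hc
    obtain ⟨m, Y, hY, hEq⟩ := hc S_mem_genSub
    have hne : (1 : ℂ) - (((2 * m : ℤ) : ℂ)) ≠ 0 := by
      intro h0
      have h1 : (1 : ℂ) = (((2 * m : ℤ) : ℂ)) := sub_eq_zero.mp h0
      have : (1 : ℤ) = 2 * m := by exact_mod_cast h1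
      omega
    have hYS : ((1 : ℂ) - (((2 * m : ℤ) : ℂ))) • S = Y := by
      have hY' : Y = S - (((2 * m : ℤ) : ℂ)) • S := eq_sub_of_add_eq' hEq.symm
      rw [sub_smul, one_smul]
      exact hY'.symm
    have : S ∈ JSplus J S := by
      have := JSplus_smul hJ (((1 : ℂ) - (((2 * m : ℤ) : ℂ)))⁻¹) (hYS ▸ hY)
      rwa [smul_smul, inv_mul_cancel₀ hne, one_smul] at this
    exact hSnotin this


/-- `JS + SJ + J(S)J` is never a maximal `J`-ideal in `⟨S⟩_J`. -/
theorem stmt_15 (J : Set (H →L[ℂ] H)) (hJ : IsBHIdeal J)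
    (S : H →L[ℂ] H) (hS : S ∈ J)
    (h : JSplus J S ⊂ genSub J {S}) :
    ∃ I, IsSubideal J I ∧ JSplus J S ⊂ I ∧ I ⊂ genSub J {S} := by
  exact stmt_15' J hJ S hS h
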